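/- Let X ∈ ℝ^{p×p} be symmetric positive definite and Y ∈ ℝ^{q×p} have full row rank. Then the block matrix F = −[[X, Yᵀ],[−Y, 0]] ∈ ℝ^{(p+q)×(p+q)} is Hurwitz, i.e., every complex eigenvalue of F has strictly negative real part. -/

import Mathlib

open Matrix

private lemma re_quad {n : Type*} [Fintype n] (M : Matrix n n ℝ) (v : n → ℂ) :
    (star v ⬝ᵥ ((M.map (fun a : ℝ => (a : ℂ))) *ᵥ v)).re =
      (fun i => (v i).re) ⬝ᵥ (M *ᵥ fun i => (v i).re) +
      (fun i => (v i).im) ⬝ᵥ (M *ᵥ fun i => (v i).im) := by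
  simp only [dotProduct, mulVec, Matrix.map_apply, Pi.star_apply, Finset.mul_sum,
    Complex.re_sum]
  rw [← Finset.sum_add_distrib]
  refine Finset.sum_congr rfl fun i _ => ?_
  rw [← Finset.sum_add_distrib]
  refine Finset.sum_congr rfl fun j _ => ?_
  simp [Complex.mul_re, Complex.mul_im]

private lemma quad_block {p q : ℕ} (X : Matrix (Fin p) (Fin p) ℝ)
    (Y : Matrix (Fin q) (Fin p) ℝ) (x : Fin p ⊕ Fin q → ℝ) :
    x ⬝ᵥ ((fromBlocks X Yᵀ (-Y) 0) *ᵥ x) = (x ∘ Sum.inl) ⬝ᵥ (X *ᵥ (x ∘ Sum.inl)) := by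
  have hx : x = Sum.elim (x ∘ Sum.inl) (x ∘ Sum.inr) := by
    funext i; cases i <;> rfl
  have h1 : (x ∘ Sum.inl) ⬝ᵥ (Yᵀ *ᵥ (x ∘ Sum.inr)) = (x ∘ Sum.inr) ⬝ᵥ (Y *ᵥ (x ∘ Sum.inl)) := by
    rw [Matrix.dotProduct_mulVec, Matrix.vecMul_transpose, dotProduct_comm]
  conv_lhs => rw [hx]
  rw [Matrix.fromBlocks_mulVec, sumElim_dotProduct_sumElim, dotProduct_add,
    dotProduct_add]
  simp only [Sum.elim_comp_inl, Sum.elim_comp_inr]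
  rw [h1, Matrix.neg_mulVec, dotProduct_neg, Matrix.zero_mulVec, dotProduct_zero]
  ring

private lemma transpose_inj {p q : ℕ} (Y : Matrix (Fin q) (Fin p) ℝ) (hY : Y.rank = q)
    (x : Fin q → ℝ) (hx : Yᵀ *ᵥ x = 0) : x = 0 := by
  have h1 : Yᵀ.rank = q := by rw [Matrix.rank_transpose]; exact hY
  have h2 := LinearMap.finrank_range_add_finrank_ker (Yᵀ.mulVecLin)
  rw [show Module.finrank ℝ (LinearMap.range Yᵀ.mulVecLin) = q from h1,
    Module.finrank_pi] at h2
  simp only [Fintype.card_fin] at h2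
  have hker : LinearMap.ker (Yᵀ.mulVecLin) = ⊥ :=
    Submodule.finrank_eq_zero.mp (by omega)
  have : x ∈ LinearMap.ker (Yᵀ.mulVecLin) := by
    rw [LinearMap.mem_ker, Matrix.mulVecLin_apply]; exact hx
  rw [hker] at this
  simpa using this

theorem statement9 {p q : ℕ} (X : Matrix (Fin p) (Fin p) ℝ) (Y : Matrix (Fin q) (Fin p) ℝ)
    (hX : X.PosDef) (hY : Y.rank = q) :
    ∀ z : ℂ, Module.End.HasEigenvalue
        (Matrix.mulVecLin ((-(Matrix.fromBlocks X Yᵀ (-Y) 0)).map (fun a : ℝ => (a : ℂ)))) z →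
      z.re < 0 := by
  intro z hz
  obtain ⟨v, hv⟩ := hz.exists_hasEigenvector
  have hvne : v ≠ 0 := hv.right
  have hEq : ((-(Matrix.fromBlocks X Yᵀ (-Y) 0)).map (fun a : ℝ => (a : ℂ))) *ᵥ v = z • v := by
    simpa [Matrix.mulVecLin_apply] using hv.apply_eq_smul
  set a : Fin p ⊕ Fin q → ℝ := fun i => (v i).re with ha
  set b : Fin p ⊕ Fin q → ℝ := fun i => (v i).im with hb
  -- the quadratic form equation
  have key : (star v ⬝ᵥ (((-(Matrix.fromBlocks X Yᵀ (-Y) 0)).map (fun a : ℝ => (a : ℂ))) *ᵥ v))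
      = z * (star v ⬝ᵥ v) := by
    rw [hEq, dotProduct_smul, smul_eq_mul]
  have hquadneg : ∀ x : Fin p ⊕ Fin q → ℝ,
      x ⬝ᵥ ((-(fromBlocks X Yᵀ (-Y) 0)) *ᵥ x) = -((x ∘ Sum.inl) ⬝ᵥ (X *ᵥ (x ∘ Sum.inl))) := by
    intro x
    rw [Matrix.neg_mulVec, dotProduct_neg, quad_block]
  have hre : (star v ⬝ᵥ (((-(Matrix.fromBlocks X Yᵀ (-Y) 0)).map (fun a : ℝ => (a : ℂ))) *ᵥ v)).re
      = -((a ∘ Sum.inl) ⬝ᵥ (X *ᵥ (a ∘ Sum.inl)) + (b ∘ Sum.inl) ⬝ᵥ (X *ᵥ (b ∘ Sum.inl))) := by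
    rw [re_quad, hquadneg a, hquadneg b]; ring
  -- star v ⬝ᵥ v is real and positive
  have hs : star v ⬝ᵥ v = ((∑ i, Complex.normSq (v i) : ℝ) : ℂ) := by
    simp [dotProduct, Complex.normSq_eq_conj_mul_self]
  have hsre : (star v ⬝ᵥ v).re = ∑ i, Complex.normSq (v i) := by rw [hs]; simp
  have hsim : (star v ⬝ᵥ v).im = 0 := by rw [hs]; simp
  have hspos : 0 < (star v ⬝ᵥ v).re := by
    rw [hsre]
    have : ∃ i, v i ≠ 0 := by
      by_contra h; push_neg at h; exact hvne (funext h)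
    obtain ⟨i, hi⟩ := this
    refine Finset.sum_pos' (fun j _ => Complex.normSq_nonneg _) ⟨i, Finset.mem_univ i, ?_⟩
    exact Complex.normSq_pos.mpr hi
  have hzre : z.re * (star v ⬝ᵥ v).re
      = -((a ∘ Sum.inl) ⬝ᵥ (X *ᵥ (a ∘ Sum.inl)) + (b ∘ Sum.inl) ⬝ᵥ (X *ᵥ (b ∘ Sum.inl))) := by
    have := congrArg Complex.re key
    rw [hre, Complex.mul_re, hsim, mul_zero, sub_zero] at this
    linarith [this.symm.le, this.le]
  by_contra hc
  push_neg at hc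
  have hXa : 0 ≤ (a ∘ Sum.inl) ⬝ᵥ (X *ᵥ (a ∘ Sum.inl)) := by
    simpa using hX.posSemidef.dotProduct_mulVec_nonneg (a ∘ Sum.inl)
  have hXb : 0 ≤ (b ∘ Sum.inl) ⬝ᵥ (X *ᵥ (b ∘ Sum.inl)) := by
    simpa using hX.posSemidef.dotProduct_mulVec_nonneg (b ∘ Sum.inl)
  have hprod : 0 ≤ z.re * (star v ⬝ᵥ v).re := mul_nonneg hc hspos.le
  have hza : (a ∘ Sum.inl) ⬝ᵥ (X *ᵥ (a ∘ Sum.inl)) = 0 ∧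
      (b ∘ Sum.inl) ⬝ᵥ (X *ᵥ (b ∘ Sum.inl)) = 0 := by
    constructor <;> nlinarith [hzre, hXa, hXb]
  have hau : a ∘ Sum.inl = 0 := by
    by_contra h
    have := hX.dotProduct_mulVec_pos (x := a ∘ Sum.inl) h
    simp only [star_trivial] at this
    rw [hza.1] at this
    simp at this
  have hbu : b ∘ Sum.inl = 0 := by
    by_contra h
    have := hX.dotProduct_mulVec_pos (x := b ∘ Sum.inl) h
    simp only [star_trivial] at this
    rw [hza.2] at this
    simp at this
  have hinl : ∀ i, v (Sum.inl i) = 0 := by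
    intro i
    have h1 : (v (Sum.inl i)).re = 0 := congrFun hau i
    have h2 : (v (Sum.inl i)).im = 0 := congrFun hbu i
    exact Complex.ext h1 h2
  -- top block of eigen equation gives Yᵀ *ᵥ w = 0
  have htop : ∀ i : Fin p, (∑ j : Fin q, ((Yᵀ i j : ℝ) : ℂ) * v (Sum.inr j)) = 0 := by
    intro i
    have := congrFun hEq (Sum.inl i)
    simp only [Matrix.mulVec, dotProduct, Pi.smul_apply, smul_eq_mul, hinl i, mul_zero] at this
    rw [Fintype.sum_sum_type] at this
    simp only [Matrix.map_apply, Matrix.neg_apply, Matrix.fromBlocks_apply₁₁,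
      Matrix.fromBlocks_apply₁₂] at this
    have h0 : ∀ j : Fin p, ((-X i j : ℝ) : ℂ) * v (Sum.inl j) = 0 := by
      intro j; rw [hinl j, mul_zero]
    rw [Finset.sum_congr rfl (fun j _ => h0 j), Finset.sum_const, smul_zero, zero_add] at this
    have : ∑ j : Fin q, ((-Yᵀ i j : ℝ) : ℂ) * v (Sum.inr j) = 0 := this
    rw [← neg_eq_zero, ← Finset.sum_neg_distrib]
    rw [← this]
    refine Finset.sum_congr rfl fun j _ => ?_
    push_cast
    ring
  have hwre : Yᵀ *ᵥ (fun j => (v (Sum.inr j)).re) = 0 := by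
    funext i
    have := congrArg Complex.re (htop i)
    simpa [Matrix.mulVec, dotProduct, Complex.re_sum, Complex.mul_re] using this
  have hwim : Yᵀ *ᵥ (fun j => (v (Sum.inr j)).im) = 0 := by
    funext i
    have := congrArg Complex.im (htop i)
    simpa [Matrix.mulVec, dotProduct, Complex.im_sum, Complex.mul_im] using this
  have h1 := transpose_inj Y hY _ hwre
  have h2 := transpose_inj Y hY _ hwim
  apply hvne
  funext i
  cases i with
  | inl i => exact hinl i
  | inr j => exact Complex.ext (congrFun h1 j) (congrFun h2 j)
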